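/- Let G be a connected simple graph with at least 3 vertices, let x, y ∈ V(G) be distinct, and let σ ⊆ E(G) be nonempty. Then σ ∈ A_y \ A_x if and only if: (1) the edge-induced subgraph G_σ is connected, (2) the vertex set V_σ of G_σ is a vertex cover of G, and (3) x ∈ V_σ and y ∉ V_σ. Here A_v = { F ⊆ E(G) : Shade_v(F) ⊊ E(G) }. -/

import Mathlib

open SimpleGraph

/-- `Shade_v(F)`: edges of `G` with an endpoint connected to `v` by an `F`-path. -/
def Shade {V : Type*} (G : SimpleGraph V) (v : V) (F : Set (Sym2 V)) : Set (Sym2 V) :=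
  {e ∈ G.edgeSet | ∃ u ∈ e, (SimpleGraph.fromEdgeSet F).Reachable u v}

/-- The simplicial complex `A_v`. -/
def Avert {V : Type*} (G : SimpleGraph V) (v : V) : Set (Set (Sym2 V)) :=
  {F | F ⊆ G.edgeSet ∧ Shade G v F ⊂ G.edgeSet}

/-- Vertex set of the edge-induced subgraph `G_σ`. -/
def edgeVerts {V : Type*} (σ : Set (Sym2 V)) : Set V :=
  {u | ∃ e ∈ σ, u ∈ e}

/-- Connectedness of the edge-induced subgraph `G_σ`. -/
def edgeConnected {V : Type*} (σ : Set (Sym2 V)) : Prop :=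
  σ.Nonempty ∧ ∀ u ∈ edgeVerts σ, ∀ w ∈ edgeVerts σ,
    (SimpleGraph.fromEdgeSet σ).Reachable u w

/-- `X` is a vertex cover of `G`. -/
def IsVertexCover {V : Type*} (G : SimpleGraph V) (X : Set V) : Prop :=
  ∀ e ∈ G.edgeSet, ∃ u ∈ e, u ∈ X

/-- A nucleus of `G`: a connected subgraph whose vertex set is a vertex cover. -/
def IsNucleus {V : Type*} (G : SimpleGraph V) (N : G.Subgraph) : Prop :=
  N.Connected ∧ _root_.IsVertexCover G N.verts

/-- The `U`-nucleus complex `Δ^G_U`. -/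
def nucleusComplex {V : Type*} (G : SimpleGraph V) (U : Set V) : Set (Set (Sym2 V)) :=
  {S | ∃ N : G.Subgraph, IsNucleus G N ∧ U ⊆ N.verts ∧ S = G.edgeSet \ N.edgeSet}


lemma shade_subset {V : Type*} (G : SimpleGraph V) (v : V) (F : Set (Sym2 V)) :
    Shade G v F ⊆ G.edgeSet := fun _ he => he.1

lemma reach_of_isolated {V : Type*} {σ : Set (Sym2 V)} {y u : V}
    (hy : y ∉ edgeVerts σ) (h : (SimpleGraph.fromEdgeSet σ).Reachable u y) : u = y := by
  obtain ⟨p⟩ := h.symm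
  cases p with
  | nil => rfl
  | cons hadj _ =>
    rw [SimpleGraph.fromEdgeSet_adj] at hadj
    exact absurd ⟨_, hadj.1, Sym2.mem_mk_left _ _⟩ hy

lemma reach_of_mem_edge {V : Type*} {σ : Set (Sym2 V)} {e : Sym2 V} (he : e ∈ σ)
    {u w : V} (hu : u ∈ e) (hw : w ∈ e) : (SimpleGraph.fromEdgeSet σ).Reachable u w := by
  rcases eq_or_ne u w with rfl | hne
  · exact SimpleGraph.Reachable.refl u
  · refine SimpleGraph.Adj.reachable ?_
    rw [SimpleGraph.fromEdgeSet_adj]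
    exact ⟨(Sym2.mem_and_mem_iff hne).mp ⟨hu, hw⟩ ▸ he, hne⟩

theorem stmt_3 {V : Type*} [Fintype V] (G : SimpleGraph V) (hG : G.Connected)
    (h3 : 3 ≤ Fintype.card V) (x y : V) (hxy : x ≠ y)
    (σ : Set (Sym2 V)) (hσE : σ ⊆ G.edgeSet) (hσne : σ.Nonempty) :
    σ ∈ Avert G y \ Avert G x ↔
      edgeConnected σ ∧ _root_.IsVertexCover G (edgeVerts σ) ∧
        x ∈ edgeVerts σ ∧ y ∉ edgeVerts σ := by
  constructor
  · rintro ⟨⟨-, hy⟩, hx⟩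
    have hxeq : Shade G x σ = G.edgeSet := by
      by_contra hne
      exact hx ⟨hσE, (shade_subset G x σ).ssubset_of_ne hne⟩
    have reach_to_x : ∀ w ∈ edgeVerts σ, (SimpleGraph.fromEdgeSet σ).Reachable w x := by
      rintro w ⟨e, heσ, hwe⟩
      have : e ∈ Shade G x σ := hxeq ▸ hσE heσ
      obtain ⟨-, u, hue, hux⟩ := this
      exact (reach_of_mem_edge heσ hwe hue).trans hux
    have hxV : x ∈ edgeVerts σ := by
      by_contra hxV
      obtain ⟨e, heσ⟩ := hσne
      have : e ∈ Shade G x σ := hxeq ▸ hσE heσ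
      obtain ⟨-, u, hue, hux⟩ := this
      exact hxV ⟨e, heσ, reach_of_isolated hxV hux ▸ hue⟩
    have hyV : y ∉ edgeVerts σ := by
      intro hyV
      apply hy.ne
      apply Set.Subset.antisymm (shade_subset G y σ)
      intro e heE
      have : e ∈ Shade G x σ := hxeq ▸ heE
      obtain ⟨-, u, hue, hux⟩ := this
      exact ⟨heE, u, hue, hux.trans (reach_to_x y hyV).symm⟩
    refine ⟨⟨hσne, fun u hu w hw => (reach_to_x u hu).trans (reach_to_x w hw).symm⟩,
      ?_, hxV, hyV⟩
    intro e heE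
    have : e ∈ Shade G x σ := hxeq ▸ heE
    obtain ⟨-, u, hue, hux⟩ := this
    by_cases huV : u ∈ edgeVerts σ
    · exact ⟨u, hue, huV⟩
    · exact ⟨u, hue, (reach_of_isolated huV hux.symm) ▸ hxV⟩
  · rintro ⟨⟨-, hconn⟩, hcov, hxV, hyV⟩
    have hxeq : Shade G x σ = G.edgeSet := by
      apply Set.Subset.antisymm (shade_subset G x σ)
      intro e heE
      obtain ⟨u, hue, huV⟩ := hcov e heE
      exact ⟨heE, u, hue, hconn u huV x hxV⟩
    refine ⟨⟨hσE, ?_⟩, fun h => h.2.ne hxeq⟩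
    obtain ⟨e, heσ⟩ := hσne
    refine (shade_subset G y σ).ssubset_of_ne fun heq => ?_
    have : e ∈ Shade G y σ := heq ▸ hσE heσ
    obtain ⟨-, u, hue, huy⟩ := this
    exact hyV ⟨e, heσ, reach_of_isolated hyV huy ▸ hue⟩
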